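/- Let K be a field, let a_1, …, a_m be positive integers with gcd(a_1, …, a_m) = 1, let b_1, …, b_m be non-negative integers and set b = b_1 a_1 + … + b_m a_m, and let c > 1 be an integer with gcd(b, c) = 1. Let φ : K[t_1, …, t_m] → K[Y] be the K-algebra homomorphism with φ(t_i) = Y^{a_i}, and let φ' : K[t_1, …, t_{m+1}] → K[Y] be the K-algebra homomorphism with φ'(t_i) = Y^{c·a_i} for 1 ≤ i ≤ m and φ'(t_{m+1}) = Y^b. Then the kernel of φ' equals the ideal of K[t_1, …, t_{m+1}] generated by the kernel of φ together with the single element t_{m+1}^c − t_1^{b_1}·…·t_m^{b_m}. -/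

import Mathlib

open MvPolynomial

/-- Watanabe's gluing lemma: if `b = ∑ b_i a_i`, `gcd(a_1,…,a_m) = 1`,
`c > 1` and `gcd(b,c) = 1`, then the kernel of `φ' : K[t_1,…,t_{m+1}] → K[Y]`,
`t_i ↦ Y^{c a_i}` (`i ≤ m`), `t_{m+1} ↦ Y^b`, is generated by the kernel of
`φ : K[t_1,…,t_m] → K[Y]`, `t_i ↦ Y^{a_i}`, together with `t_{m+1}^c − t_1^{b_1}⋯t_m^{b_m}`.
(`Fin.castSucc` is the inclusion `K[t_1,…,t_m] ↪ K[t_1,…,t_{m+1}]` on variables and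
`Fin.last m` is the variable `t_{m+1}`.) -/
theorem watanabe_gluing (K : Type*) [Field K] (m : ℕ) (hm : 1 ≤ m)
    (a : Fin m → ℕ) (ha : ∀ i, 0 < a i) (hgcd : Finset.univ.gcd a = 1)
    (bb : Fin m → ℕ) (c : ℕ) (hc : 1 < c)
    (hbc : Nat.gcd (∑ i, bb i * a i) c = 1) :
    RingHom.ker (aeval (R := K) (fun v : Fin (m + 1) =>
        if h : v.1 < m then (Polynomial.X : Polynomial K) ^ (c * a ⟨v.1, h⟩)
        else Polynomial.X ^ (∑ i, bb i * a i))).toRingHom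
      = Ideal.span
          ((MvPolynomial.rename (Fin.castSucc) ''
              (RingHom.ker (aeval (R := K) (fun i : Fin m =>
                (Polynomial.X : Polynomial K) ^ a i)).toRingHom : Set (MvPolynomial (Fin m) K)))
            ∪ {X (Fin.last m) ^ c - ∏ i : Fin m, X i.castSucc ^ bb i}) := by
  classical
  have hc0 : 0 < c := by omega
  set b : ℕ := ∑ i, bb i * a i with hbdef
  set v : Fin (m + 1) → Polynomial K := fun v : Fin (m + 1) =>
      if h : v.1 < m then (Polynomial.X : Polynomial K) ^ (c * a ⟨v.1, h⟩)
      else Polynomial.X ^ b with hvdef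
  set φ : MvPolynomial (Fin m) K →ₐ[K] Polynomial K :=
      aeval (fun i : Fin m => (Polynomial.X : Polynomial K) ^ a i) with hφdef
  set ψ : MvPolynomial (Fin m) K →ₐ[K] Polynomial K :=
      aeval (fun i : Fin m => (Polynomial.X : Polynomial K) ^ (c * a i)) with hψdef
  set E : MvPolynomial (Fin (m + 1)) K ≃ₐ[K] Polynomial (MvPolynomial (Fin m) K) :=
      (renameEquiv K (finRotate (m + 1))).trans (MvPolynomial.finSuccEquiv K m) with hEdef
  set Φ : Polynomial (MvPolynomial (Fin m) K) →ₐ[K] Polynomial K :=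
      Polynomial.aevalTower ψ (Polynomial.X ^ b) with hΦdef
  set P : MvPolynomial (Fin m) K := ∏ i : Fin m, X i ^ bb i with hPdef
  set g : MvPolynomial (Fin (m + 1)) K :=
      X (Fin.last m) ^ c - ∏ i : Fin m, X i.castSucc ^ bb i with hgdef
  set G : Polynomial (MvPolynomial (Fin m) K) := Polynomial.X ^ c - Polynomial.C P with hGdef
  -- basic computations with E
  have hElast : E (X (Fin.last m)) = Polynomial.X := by
    simp [hEdef, finRotate_last, finSuccEquiv_X_zero]
  have hEcast : ∀ i : Fin m, E (X i.castSucc) = Polynomial.C (X i) := by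
    intro i
    have h1 : finRotate (m + 1) i.castSucc = i.succ := by
      simp [finRotate_succ_apply, Fin.coeSucc_eq_succ]
    simp [hEdef, h1, finSuccEquiv_X_succ]
  have hErename : ∀ p : MvPolynomial (Fin m) K,
      E (rename Fin.castSucc p) = Polynomial.C p := by
    intro p
    induction p using MvPolynomial.induction_on with
    | C k => simp [hEdef, finSuccEquiv_apply, eval₂Hom_C]
    | add p q hp hq => simp [map_add, hp, hq]
    | mul_X p i hp => rw [map_mul, map_mul, hp, rename_X, hEcast i, ← Polynomial.C_mul]
  -- ψ = expand ∘ φ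
  have hψφ : ∀ p : MvPolynomial (Fin m) K, ψ p = Polynomial.expand K c (φ p) := by
    intro p
    have : ψ = (Polynomial.expand K c).comp φ := by
      apply MvPolynomial.algHom_ext
      intro i
      simp [hψdef, hφdef, map_pow, Polynomial.expand_X, ← pow_mul]
    rw [this]; rfl
  have hψP : ψ P = Polynomial.X ^ (c * b) := by
    rw [hPdef, map_prod]
    have : ∀ i : Fin m, ψ (X i ^ bb i) = Polynomial.X ^ (c * a i * bb i) := by
      intro i; rw [map_pow]; simp [hψdef, ← pow_mul]
    rw [Finset.prod_congr rfl (fun i _ => this i), Finset.prod_pow_eq_pow_sum]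
    congr 1
    rw [hbdef, Finset.mul_sum]
    exact Finset.sum_congr rfl fun i _ => by ring
  -- aeval v = Φ ∘ E
  have hkey : ∀ f : MvPolynomial (Fin (m + 1)) K, aeval v f = Φ (E f) := by
    have : (aeval v : MvPolynomial (Fin (m + 1)) K →ₐ[K] Polynomial K)
        = Φ.comp E.toAlgHom := by
      apply MvPolynomial.algHom_ext
      intro w
      induction w using Fin.lastCases with
      | last =>
        have hv : v (Fin.last m) = Polynomial.X ^ b := by
          simp [hvdef, Fin.last]
        simp [hv, hElast, hΦdef, Polynomial.aevalTower_X]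
      | cast i =>
        have hv : v i.castSucc = Polynomial.X ^ (c * a i) := by
          simp only [hvdef, Fin.coe_castSucc]
          rw [dif_pos i.2]
        simp [hv, hEcast, hΦdef, Polynomial.aevalTower_C, hψdef]
    intro f
    rw [this]; rfl
  have hEg : E g = G := by
    rw [hgdef, hGdef, map_sub, map_pow, hElast, map_prod, hPdef, map_prod]
    congr 1
    refine Finset.prod_congr rfl fun i _ => ?_
    rw [map_pow, hEcast, ← map_pow]
  have hΦX : Φ Polynomial.X = Polynomial.X ^ b := by
    simp [hΦdef, Polynomial.aevalTower_X]
  have hΦC : ∀ p : MvPolynomial (Fin m) K, Φ (Polynomial.C p) = ψ p := by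
    intro p; simp [hΦdef, Polynomial.aevalTower_C]
  have hΦG : Φ G = 0 := by
    have h1 : Φ G = Φ Polynomial.X ^ c - Φ (Polynomial.C P) := by
      rw [hGdef, map_sub, map_pow]
    rw [h1, hΦX, hΦC, hψP, ← pow_mul, mul_comm b c, sub_self]
  -- the coprimality fact in ℤ
  have hcop : IsCoprime (c : ℤ) (b : ℤ) := by
    rw [Int.isCoprime_iff_gcd_eq_one, Int.gcd_natCast_natCast, Nat.gcd_comm]
    exact hbc
  -- core lemma
  have hcore : ∀ R : Polynomial (MvPolynomial (Fin m) K),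
      Φ R = 0 → R.degree < (c : ℕ) → ∀ j, φ (R.coeff j) = 0 := by
    intro R hR hdeg j
    by_cases hj : j ∈ R.support
    swap
    · rw [Polynomial.notMem_support_iff.mp hj, map_zero]
    have hRne : R ≠ 0 := fun h => by simp [h] at hj
    have hsupp : ∀ j' ∈ R.support, j' < c := by
      intro j' hj'
      have h1 : (j' : WithBot ℕ) ≤ R.degree := Polynomial.le_degree_of_mem_supp j' hj'
      have := lt_of_le_of_lt h1 hdeg
      exact_mod_cast this
    have hjc : j < c := hsupp j hj
    ext k
    rw [Polynomial.coeff_zero]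
    have hΦR : Φ R = ∑ j' ∈ R.support,
        Polynomial.expand K c (φ (R.coeff j')) * Polynomial.X ^ (b * j') := by
      conv_lhs => rw [R.as_sum_support_C_mul_X_pow]
      rw [map_sum]
      refine Finset.sum_congr rfl fun j' _ => ?_
      rw [map_mul, map_pow, hΦC, hΦX, hψφ, ← pow_mul]
    have h0 : (Φ R).coeff (c * k + j * b) = 0 := by rw [hR, Polynomial.coeff_zero]
    rw [hΦR, Polynomial.finset_sum_coeff] at h0
    rw [Finset.sum_eq_single j] at h0
    · rw [Polynomial.coeff_mul_X_pow',
        if_pos (by rw [mul_comm b j]; omega : b * j ≤ c * k + j * b)] at h0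
      have : c * k + j * b - b * j = c * k := by rw [mul_comm b j]; omega
      rw [this, Polynomial.coeff_expand_mul' hc0] at h0
      exact h0
    · intro j' hj' hne
      rw [Polynomial.coeff_mul_X_pow']
      split_ifs with hle
      · rw [Polynomial.coeff_expand hc0]
        rw [if_neg]
        intro hdvd
        obtain ⟨t, ht⟩ := hdvd
        have hjc' : j' < c := hsupp j' hj'
        have hZ : (c : ℤ) ∣ (j : ℤ) * b - (j' : ℤ) * b := by
          have h1 : ((c * k + j * b - b * j' : ℕ) : ℤ) = (c : ℤ) * t := by
            exact_mod_cast ht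
          have h2 : ((c * k + j * b - b * j' : ℕ) : ℤ)
              = (c : ℤ) * k + (j : ℤ) * b - (b : ℤ) * j' := by
            push_cast [Nat.cast_sub hle]
            ring
          refine ⟨t - k, ?_⟩
          rw [mul_sub, ← h1, h2]
          ring
        have hZ' : (c : ℤ) ∣ (b : ℤ) * ((j : ℤ) - (j' : ℤ)) := by
          have : (j : ℤ) * b - (j' : ℤ) * b = (b : ℤ) * ((j : ℤ) - (j' : ℤ)) := by ring
          rwa [this] at hZ
        have hdvd2 : (c : ℤ) ∣ (j : ℤ) - (j' : ℤ) := hcop.dvd_of_dvd_mul_left hZ'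
        have : (j : ℤ) - (j' : ℤ) = 0 := by
          refine Int.eq_zero_of_abs_lt_dvd hdvd2 ?_
          rw [abs_sub_lt_iff]
          have h3 : ((j : ℤ) : ℤ) = (j : ℤ) := rfl
          constructor <;> omega
        exact hne (by omega : j' = j)
      · rfl
    · intro h; exact absurd hj h
  -- G is monic of degree c
  have hGmonic : G.Monic := by
    rw [hGdef]
    apply Polynomial.monic_X_pow_sub
    exact lt_of_le_of_lt Polynomial.degree_C_le (by exact_mod_cast hc0)
  have hGdeg : G.degree = (c : ℕ) := by
    rw [hGdef, Polynomial.degree_X_pow_sub_C hc0]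
  -- main proof
  apply le_antisymm
  · -- ker ⊆ span
    intro f hf
    have hf0 : aeval v f = 0 := by
      simpa [hvdef] using hf
    have hΦEf : Φ (E f) = 0 := by rw [← hkey]; exact hf0
    set q : Polynomial (MvPolynomial (Fin m) K) := E f /ₘ G with hq
    set R : Polynomial (MvPolynomial (Fin m) K) := E f %ₘ G with hRd
    have hdecomp : E f = R + G * q := (Polynomial.modByMonic_add_div (E f) G).symm
    have hΦR : Φ R = 0 := by
      have : Φ (E f) = Φ R + Φ G * Φ q := by rw [hdecomp, map_add, map_mul]
      rw [hΦEf, hΦG, zero_mul, add_zero] at this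
      exact this.symm
    have hdegR : R.degree < (c : ℕ) := by
      rw [← hGdeg]; exact Polynomial.degree_modByMonic_lt _ hGmonic
    have hcoeffs := hcore R hΦR hdegR
    have hfR : f = E.symm R + g * E.symm q := by
      apply E.injective
      rw [map_add, map_mul, hEg, E.apply_symm_apply, E.apply_symm_apply, hdecomp]
    rw [hfR]
    apply Ideal.add_mem
    · -- E.symm R ∈ span
      have hR' : E.symm R = ∑ j ∈ R.support,
          rename Fin.castSucc (R.coeff j) * X (Fin.last m) ^ j := by
        apply E.injective
        rw [E.apply_symm_apply, map_sum]
        conv_lhs => rw [R.as_sum_support_C_mul_X_pow]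
        refine Finset.sum_congr rfl fun j _ => ?_
        rw [map_mul, map_pow, hErename, hElast]
      rw [hR']
      apply Ideal.sum_mem
      intro j _
      refine Ideal.mul_mem_right _ _ (Ideal.subset_span (Or.inl ?_))
      exact ⟨R.coeff j, by simpa using hcoeffs j, rfl⟩
    · exact Ideal.mul_mem_right _ _ (Ideal.subset_span (Or.inr rfl))
  · -- span ⊆ ker
    rw [Ideal.span_le]
    rintro x (⟨p, hp, rfl⟩ | rfl)
    · have hp0 : φ p = 0 := by simpa [hφdef] using hp
      have hvc : v ∘ Fin.castSucc = fun i : Fin m =>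
          (Polynomial.X : Polynomial K) ^ (c * a i) := by
        funext i
        show v i.castSucc = _
        simp only [hvdef, Fin.coe_castSucc]
        rw [dif_pos i.2]
      have : aeval v (rename Fin.castSucc p) = ψ p := by
        rw [aeval_rename, hvc, ← hψdef]
      have h0 : aeval v (rename Fin.castSucc p) = 0 := by
        rw [this, hψφ, hp0, map_zero]
      simpa [hvdef] using h0
    · have h0 : aeval v g = 0 := by rw [hkey, hEg, hΦG]
      simpa [hvdef, hgdef] using h0
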